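/- Let t_1, …, t_k (k ≥ 1) be a sequence in which each t_j is either an integer constant or a variable from a finite set V (variables may occur several times), let S be a finite nonempty set of integers, and let c be the product of the integer constants among the t_j (c = 1 if there are none). Then there exists an assignment ν : V → S such that the product obtained from t_1 × … × t_k by replacing each variable occurrence of x by ν(x) is strictly positive if and only if one of the following holds: (i) all t_j are constants and c > 0; (ii) c > 0 and S contains a positive integer; (iii) c > 0, S contains a negative integer, and the total number of variable occurrences among the t_j is even; (iv) c < 0, S contains a negative integer, and the total number of variable occurrences among the t_j is odd; or (v) c < 0, S contains both a positive and a negative integer, and some variable of V has an odd number of occurrences among the t_j. -/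

import Mathlib

def tval (ν : ℕ → ℤ) : ℤ ⊕ ℕ → ℤ
  | Sum.inl z => z
  | Sum.inr x => ν x

lemma prodA (ts : List (ℤ ⊕ ℕ)) (ν : ℕ → ℤ) :
    (ts.map (tval ν)).prod =
      (ts.filterMap (fun t => Sum.getLeft? t)).prod *
        ((ts.filterMap Sum.getRight?).map ν).prod := by
  induction ts with
  | nil => simp
  | cons t ts ih => cases t <;> simp [tval, ih, List.filterMap_cons] <;> ring

lemma lenB (ts : List (ℤ ⊕ ℕ)) :
    (ts.filterMap Sum.getRight?).length = ts.countP (fun t => t.isRight) := by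
  induction ts with
  | nil => simp
  | cons t ts ih => cases t <;> simp [List.countP_cons, ih, List.filterMap_cons]

lemma beq1 (v : ℤ) (x : ℕ) : ((Sum.inl v : ℤ ⊕ ℕ) == Sum.inr x) = false := rfl
lemma beq2 (a x : ℕ) : ((Sum.inr a : ℤ ⊕ ℕ) == Sum.inr x) = (a == x) := rfl

lemma cntC (ts : List (ℤ ⊕ ℕ)) (x : ℕ) :
    (ts.filterMap Sum.getRight?).count x = ts.count (Sum.inr x) := by
  induction ts with
  | nil => simp
  | cons t ts ih => cases t <;> simp [List.count_cons, ih, beq1, beq2, List.filterMap_cons]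

lemma memD (ts : List (ℤ ⊕ ℕ)) (x : ℕ) :
    x ∈ ts.filterMap Sum.getRight? ↔ Sum.inr x ∈ ts := by
  simp [List.mem_filterMap]

lemma negProd (l : List ℤ) (h : ∀ a ∈ l, a < 0) :
    (0 < l.prod ↔ Even l.length) := by
  induction l with
  | nil => simp
  | cons a l ih =>
    have ha : a < 0 := h a (by simp)
    have h' : ∀ b ∈ l, b < 0 := fun b hb => h b (by simp [hb])
    have hne : l.prod ≠ 0 := List.prod_ne_zero (fun hb => absurd (h' 0 hb) (by simp))
    rw [List.prod_cons, List.length_cons, Nat.even_add_one, ← ih h']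
    constructor
    · intro hp
      rcases mul_pos_iff.mp hp with ⟨h1, _⟩ | ⟨_, h2⟩
      · exact absurd h1 (not_lt.mpr ha.le)
      · exact fun hpos => absurd h2 (not_lt.mpr hpos.le)
    · intro hnp
      have : l.prod < 0 := (hne.lt_or_gt).resolve_right (fun h0 => hnp h0)
      exact mul_pos_of_neg_of_neg ha this

lemma negProdOdd (l : List ℤ) (h : ∀ a ∈ l, a < 0) (hp : l.prod < 0) :
    Odd l.length := by
  rw [← Nat.not_even_iff_odd, ← negProd l h]
  exact fun h0 => absurd hp (not_lt.mpr h0.le)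

theorem product_positive_assignment_iff
    (ts : List (ℤ ⊕ ℕ)) (hts : ts ≠ [])
    (V : Finset ℕ) (hV : ∀ x : ℕ, Sum.inr x ∈ ts → x ∈ V)
    (S : Finset ℤ) (hS : S.Nonempty)
    (c : ℤ) (hc : c = (ts.filterMap (fun t => Sum.getLeft? t)).prod) :
    (∃ ν : ℕ → ℤ, (∀ x ∈ V, ν x ∈ S) ∧ 0 < (ts.map (tval ν)).prod) ↔
      ((∀ t ∈ ts, t.isLeft) ∧ 0 < c) ∨
      (0 < c ∧ ∃ s ∈ S, 0 < s) ∨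
      (0 < c ∧ (∃ s ∈ S, s < 0) ∧ Even (ts.countP (fun t => t.isRight))) ∨
      (c < 0 ∧ (∃ s ∈ S, s < 0) ∧ Odd (ts.countP (fun t => t.isRight))) ∨
      (c < 0 ∧ (∃ s ∈ S, 0 < s) ∧ (∃ s ∈ S, s < 0) ∧
        ∃ x ∈ V, Odd (ts.count (Sum.inr x))) := by
  obtain ⟨s₀, hs₀⟩ := hS
  constructor
  · rintro ⟨ν, hν, hpos⟩
    rw [prodA ts ν, ← hc] at hpos
    set l := ts.filterMap Sum.getRight? with hldef
    set P := (l.map ν).prod with hPdef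
    have hPne : P ≠ 0 := fun h => by simp [h] at hpos
    by_cases hl0 : l = []
    · left
      constructor
      · intro t ht
        cases t with
        | inl z => simp
        | inr x =>
          exfalso
          have : x ∈ l := (memD ts x).mpr ht
          simp [hl0] at this
      · have hP1 : P = 1 := by simp [hPdef, hl0]
        rw [hP1, mul_one] at hpos; exact hpos
    · have hνmem : ∀ x ∈ l, ν x ∈ S := fun x hx => hν x (hV x ((memD ts x).mp hx))
      have hνne : ∀ x ∈ l, ν x ≠ 0 := by
        intro x hx h0
        exact hPne (by rw [hPdef]; exact List.prod_eq_zero (h0 ▸ List.mem_map_of_mem (f := ν) hx))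
      rcases mul_pos_iff.mp hpos with ⟨hcpos, hPpos⟩ | ⟨hcneg, hPneg⟩
      · by_cases hex : ∃ x ∈ l, 0 < ν x
        · obtain ⟨x, hx, hxp⟩ := hex
          exact Or.inr (Or.inl ⟨hcpos, ν x, hνmem x hx, hxp⟩)
        · push_neg at hex
          have hneg : ∀ a ∈ l.map ν, a < 0 := by
            intro a ha; obtain ⟨x, hx, rfl⟩ := List.mem_map.mp ha
            exact lt_of_le_of_ne (hex x hx) (hνne x hx)
          have heven := (negProd _ hneg).mp hPpos
          right; right; left
          refine ⟨hcpos, ?_, ?_⟩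
          · obtain ⟨x, hx⟩ := List.exists_mem_of_ne_nil l hl0
            exact ⟨ν x, hνmem x hx, hneg _ (List.mem_map_of_mem (f := ν) hx)⟩
          · rw [← lenB]
            simpa using heven
      · right; right; right
        by_cases hex : ∃ x ∈ l, 0 < ν x
        · right
          obtain ⟨x, hx, hxp⟩ := hex
          have hnegex : ∃ a ∈ l.map ν, a < 0 := by
            by_contra h; push_neg at h
            exact absurd (List.prod_nonneg fun a ha => h a ha) (not_le.mpr hPneg)
          obtain ⟨a, ha, haneg⟩ := hnegex
          obtain ⟨y, hy, rfl⟩ := List.mem_map.mp ha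
          have hodd : ∃ z ∈ l.toFinset, ¬ Even (l.count z) := by
            by_contra h; push_neg at h
            have h0 : (0:ℤ) ≤ P := by
              rw [hPdef, Finset.prod_list_map_count]
              exact Finset.prod_nonneg fun z hz => (h z hz).pow_nonneg _
            exact absurd h0 (not_le.mpr hPneg)
          obtain ⟨z, hz, hzodd⟩ := hodd
          refine ⟨hcneg, ⟨ν x, hνmem x hx, hxp⟩, ⟨ν y, hνmem y hy, haneg⟩, z,
            hV z ((memD ts z).mp (List.mem_toFinset.mp hz)), ?_⟩
          rw [← cntC]
          exact Nat.not_even_iff_odd.mp hzodd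
        · left
          push_neg at hex
          have hneg : ∀ a ∈ l.map ν, a < 0 := by
            intro a ha; obtain ⟨x, hx, rfl⟩ := List.mem_map.mp ha
            exact lt_of_le_of_ne (hex x hx) (hνne x hx)
          have hodd := negProdOdd _ hneg hPneg
          refine ⟨hcneg, ?_, ?_⟩
          · obtain ⟨x, hx⟩ := List.exists_mem_of_ne_nil l hl0
            exact ⟨ν x, hνmem x hx, hneg _ (List.mem_map_of_mem (f := ν) hx)⟩
          · rw [← lenB]
            simpa using hodd
  · rintro (⟨hall, hcpos⟩ | ⟨hcpos, s, hsS, hspos⟩ | ⟨hcpos, ⟨s, hsS, hsneg⟩, heven⟩ |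
      ⟨hcneg, ⟨s, hsS, hsneg⟩, hodd⟩ | ⟨hcneg, ⟨p, hpS, hppos⟩, ⟨n, hnS, hnneg⟩, x₀, hx₀V, hx₀odd⟩)
    · refine ⟨fun _ => s₀, fun _ _ => hs₀, ?_⟩
      have hnil : ts.filterMap Sum.getRight? = [] := by
        rw [List.filterMap_eq_nil_iff]
        intro t ht
        cases t with
        | inl z => rfl
        | inr x => exact absurd (hall _ ht) (by simp)
      rw [prodA, ← hc, hnil]
      simpa using hcpos
    · refine ⟨fun _ => s, fun _ _ => hsS, ?_⟩
      rw [prodA, ← hc, List.map_const', List.prod_replicate]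
      exact mul_pos hcpos (pow_pos hspos _)
    · refine ⟨fun _ => s, fun _ _ => hsS, ?_⟩
      rw [prodA, ← hc, List.map_const', List.prod_replicate]
      have heven' : Even (ts.filterMap Sum.getRight?).length := by rw [lenB]; exact heven
      exact mul_pos hcpos (heven'.pow_pos hsneg.ne)
    · refine ⟨fun _ => s, fun _ _ => hsS, ?_⟩
      rw [prodA, ← hc, List.map_const', List.prod_replicate]
      have hodd' : Odd (ts.filterMap Sum.getRight?).length := by rw [lenB]; exact hodd
      exact mul_pos_of_neg_of_neg hcneg (hodd'.pow_neg hsneg)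
    · refine ⟨fun x => if x = x₀ then n else p, fun x _ => ?_, ?_⟩
      · dsimp only; split <;> assumption
      · set l := ts.filterMap Sum.getRight? with hldef
        have hcnt : Odd (l.count x₀) := by rw [cntC]; exact hx₀odd
        have hmem : x₀ ∈ l.toFinset := by
          rw [List.mem_toFinset, ← List.count_pos_iff]
          exact hcnt.pos
        rw [prodA, ← hc, Finset.prod_list_map_count, ← Finset.mul_prod_erase _ _ hmem]
        have h₁ : (if x₀ = x₀ then n else p) ^ l.count x₀ < 0 := by
          rw [if_pos rfl]; exact hcnt.pow_neg hnneg
        have h₂ : 0 < ∏ m ∈ l.toFinset.erase x₀, (if m = x₀ then n else p) ^ l.count m := by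
          refine Finset.prod_pos fun m hm => ?_
          rw [if_neg (Finset.ne_of_mem_erase hm)]
          exact pow_pos hppos _
        exact mul_pos_of_neg_of_neg hcneg (mul_neg_of_neg_of_pos h₁ h₂)
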